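/- Let E be an AL-space and (T_t)_{t∈J} a Markov semigroup on E, with J = ℕ or J = (0,∞). Then the following are equivalent: (i) there is a normalised fixed point f₀ ∈ E₊ of the semigroup such that T_t converges strongly to the rank-1 projection 𝟙 ⊗ f₀ (where 𝟙 is the norm functional); (ii) there exists a non-zero lower bound for the semigroup. -/

import Mathlib

open Filter Topology

set_option linter.unusedSectionVars false

open Filter Topology

section Aux

variable {E : Type*} [NormedAddCommGroup E] [Lattice E] [HasSolidNorm E] [IsOrderedAddMonoid E] [NormedSpace ℝ E]

lemma al_norm_posneg (hAL : ∀ f g : E, 0 ≤ f → 0 ≤ g → ‖f + g‖ = ‖f‖ + ‖g‖) (x : E) :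
    ‖x‖ = ‖x⁺‖ + ‖x⁻‖ := by
  rw [← norm_abs_eq_norm x, ← posPart_add_negPart x,
    hAL _ _ (posPart_nonneg x) (negPart_nonneg x)]

lemma norm_mono_nonneg {a b : E} (ha : 0 ≤ a) (hab : a ≤ b) : ‖a‖ ≤ ‖b‖ :=
  norm_le_norm_of_abs_le_abs (by rwa [abs_of_nonneg ha, abs_of_nonneg (ha.trans hab)])

lemma norm_negPart_le (x : E) : ‖x⁻‖ ≤ ‖x‖ := by
  rw [← norm_abs_eq_norm x]
  exact norm_mono_nonneg (negPart_nonneg x)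
    (by rw [← posPart_add_negPart x]; exact le_add_of_nonneg_left (posPart_nonneg x))

lemma negPart_le_of_neg_le {x j : E} (hj : -j ≤ x) : x⁻ ≤ j⁺ := by
  rw [← posPart_neg]
  exact posPart_mono (by simpa using neg_le_neg hj)

lemma norm_negPart_sub_le (x y : E) : ‖x⁻ - y⁻‖ ≤ ‖x - y‖ := by
  have := lipschitzWith_negPart.dist_le_mul x y
  simpa [dist_eq_norm] using this

lemma dyadic_smul_nonneg (k : ℕ) {x : E} (hx : 0 ≤ x) : 0 ≤ ((2 : ℝ) ^ k)⁻¹ • x := by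
  induction k with
  | zero => simpa using hx
  | succ k ih =>
    refine nsmul_two_semiclosed ?_
    have h2 : (2 : ℕ) • (((2 : ℝ) ^ (k + 1))⁻¹ • x) = ((2 : ℝ) ^ k)⁻¹ • x := by
      rw [← Nat.cast_smul_eq_nsmul ℝ, smul_smul]
      norm_num [pow_succ]
      ring_nf
    rwa [h2]

lemma real_smul_nonneg {c : ℝ} (hc : 0 ≤ c) {x : E} (hx : 0 ≤ x) : 0 ≤ c • x := by
  have key : ∀ m k : ℕ, 0 ≤ ((m : ℝ) / 2 ^ k) • x := by
    intro m k
    rw [div_eq_mul_inv, mul_smul, Nat.cast_smul_eq_nsmul ℝ]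
    exact nsmul_nonneg (dyadic_smul_nonneg k hx) m
  have h1 : Tendsto (fun n : ℕ => ((⌈c * 2 ^ n⌉₊ : ℝ) / 2 ^ n)) atTop (𝓝 c) := by
    have hlow : ∀ n : ℕ, c ≤ (⌈c * 2 ^ n⌉₊ : ℝ) / 2 ^ n := by
      intro n
      rw [le_div_iff₀ (by positivity)]
      exact Nat.le_ceil _
    have hhigh : ∀ n : ℕ, (⌈c * 2 ^ n⌉₊ : ℝ) / 2 ^ n ≤ c + ((2 : ℝ)⁻¹) ^ n := by
      intro n
      rw [div_le_iff₀ (by positivity)]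
      have hceil := (Nat.ceil_lt_add_one (by positivity : (0:ℝ) ≤ c * 2 ^ n)).le
      have hpow : ((2:ℝ)⁻¹) ^ n * 2 ^ n = 1 := by
        rw [← mul_pow]; norm_num
      rw [add_mul, hpow]
      exact hceil
    have hupper : Tendsto (fun n : ℕ => c + ((2 : ℝ)⁻¹) ^ n) atTop (𝓝 c) := by
      have := (tendsto_const_nhds : Tendsto (fun _ : ℕ => c) atTop (𝓝 c)).add
        (tendsto_pow_atTop_nhds_zero_of_lt_one (by norm_num : (0:ℝ) ≤ 2⁻¹) (by norm_num))
      simpa using this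
    exact tendsto_of_tendsto_of_tendsto_of_le_of_le tendsto_const_nhds hupper hlow hhigh
  have h2 : Tendsto (fun n : ℕ => ((⌈c * 2 ^ n⌉₊ : ℝ) / 2 ^ n) • x) atTop (𝓝 (c • x)) :=
    h1.smul_const x
  exact isClosed_nonneg.mem_of_tendsto h2 (Eventually.of_forall fun n => key _ n)

end Aux
open Filter Topology

section Aux2
variable {E : Type*} [NormedAddCommGroup E] [Lattice E] [HasSolidNorm E] [IsOrderedAddMonoid E] [NormedSpace ℝ E]

noncomputable def onefun (x : E) : ℝ := ‖x⁺‖ - ‖x⁻‖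

lemma onefun_of_nonneg {x : E} (hx : 0 ≤ x) : onefun x = ‖x‖ := by
  rw [onefun, posPart_eq_self.mpr hx, negPart_eq_zero.mpr hx, norm_zero, sub_zero]

lemma onefun_add (hAL : ∀ f g : E, 0 ≤ f → 0 ≤ g → ‖f + g‖ = ‖f‖ + ‖g‖) (x y : E) :
    onefun (x + y) = onefun x + onefun y := by
  have key : (x + y)⁺ + (x⁻ + y⁻) = (x + y)⁻ + (x⁺ + y⁺) := by
    have hx : x⁺ = x + x⁻ := sub_eq_iff_eq_add.mp (posPart_sub_negPart x)
    have hy : y⁺ = y + y⁻ := sub_eq_iff_eq_add.mp (posPart_sub_negPart y)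
    have hxy : (x + y)⁺ = (x + y) + (x + y)⁻ := sub_eq_iff_eq_add.mp (posPart_sub_negPart (x + y))
    rw [hxy, hx, hy]; abel
  have h1 : ‖(x + y)⁺ + (x⁻ + y⁻)‖ = ‖(x + y)⁺‖ + (‖x⁻‖ + ‖y⁻‖) := by
    rw [hAL _ _ (posPart_nonneg _) (add_nonneg (negPart_nonneg _) (negPart_nonneg _)),
      hAL _ _ (negPart_nonneg _) (negPart_nonneg _)]
  have h2 : ‖(x + y)⁻ + (x⁺ + y⁺)‖ = ‖(x + y)⁻‖ + (‖x⁺‖ + ‖y⁺‖) := by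
    rw [hAL _ _ (negPart_nonneg _) (add_nonneg (posPart_nonneg _) (posPart_nonneg _)),
      hAL _ _ (posPart_nonneg _) (posPart_nonneg _)]
  have := h1.symm.trans (by rw [key, h2])
  simp only [onefun]
  linarith

lemma continuous_onefun : Continuous (onefun : E → ℝ) :=
  (continuous_norm.comp continuous_posPart).sub (continuous_norm.comp continuous_negPart)

noncomputable def oneCLM (hAL : ∀ f g : E, 0 ≤ f → 0 ≤ g → ‖f + g‖ = ‖f‖ + ‖g‖) :
    E →L[ℝ] ℝ :=
  (AddMonoidHom.mk' onefun (onefun_add hAL)).toRealLinearMap continuous_onefun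

lemma oneCLM_apply (hAL : ∀ f g : E, 0 ≤ f → 0 ≤ g → ‖f + g‖ = ‖f‖ + ‖g‖) (x : E) :
    oneCLM hAL x = onefun x := rfl

-- Markov operator lemmas
lemma markov_contraction (hAL : ∀ f g : E, 0 ≤ f → 0 ≤ g → ‖f + g‖ = ‖f‖ + ‖g‖)
    (A : E →L[ℝ] E) (hpos : ∀ f : E, 0 ≤ f → 0 ≤ A f)
    (hnorm : ∀ f : E, 0 ≤ f → ‖A f‖ = ‖f‖) (x : E) : ‖A x‖ ≤ ‖x‖ := by
  have hx : A x = A x⁺ - A x⁻ := by rw [← map_sub, posPart_sub_negPart]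
  calc ‖A x‖ ≤ ‖A x⁺‖ + ‖A x⁻‖ := by rw [hx]; exact norm_sub_le _ _
    _ = ‖x⁺‖ + ‖x⁻‖ := by
        rw [hnorm _ (posPart_nonneg x), hnorm _ (negPart_nonneg x)]
    _ = ‖x‖ := (al_norm_posneg hAL x).symm

lemma onefun_neg (x : E) : onefun (-x) = - onefun x := by
  simp [onefun, posPart_neg, negPart_neg]

lemma onefun_markov (hAL : ∀ f g : E, 0 ≤ f → 0 ≤ g → ‖f + g‖ = ‖f‖ + ‖g‖)
    (A : E →L[ℝ] E) (hpos : ∀ f : E, 0 ≤ f → 0 ≤ A f)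
    (hnorm : ∀ f : E, 0 ≤ f → ‖A f‖ = ‖f‖) (x : E) : onefun (A x) = onefun x := by
  have hx : A x = A x⁺ + (- A x⁻) := by rw [← sub_eq_add_neg, ← map_sub, posPart_sub_negPart]
  rw [hx, onefun_add hAL, onefun_neg, onefun_of_nonneg (hpos _ (posPart_nonneg x)),
    onefun_of_nonneg (hpos _ (negPart_nonneg x)), hnorm _ (posPart_nonneg x),
    hnorm _ (negPart_nonneg x), onefun, ← sub_eq_add_neg]

end Aux2

section Discrete
variable {E : Type*} [NormedAddCommGroup E] [Lattice E] [HasSolidNorm E] [IsOrderedAddMonoid E] [NormedSpace ℝ E]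

lemma pow_apply_succ (S : E →L[ℝ] E) (n : ℕ) (x : E) : (S ^ (n + 1)) x = S ((S ^ n) x) := by
  rw [pow_succ']; rfl

lemma pow_pos' (S : E →L[ℝ] E) (hSpos : ∀ f : E, 0 ≤ f → 0 ≤ S f)
    (n : ℕ) (f : E) (hf : 0 ≤ f) : 0 ≤ (S ^ n) f := by
  induction n with
  | zero => simpa using hf
  | succ n ih => rw [pow_apply_succ]; exact hSpos _ ih

lemma pow_norm' (S : E →L[ℝ] E) (hSpos : ∀ f : E, 0 ≤ f → 0 ≤ S f)
    (hSnorm : ∀ f : E, 0 ≤ f → ‖S f‖ = ‖f‖)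
    (n : ℕ) (f : E) (hf : 0 ≤ f) : ‖(S ^ n) f‖ = ‖f‖ := by
  induction n with
  | zero => simp
  | succ n ih => rw [pow_apply_succ, hSnorm _ (pow_pos' S hSpos n f hf), ih]

lemma onefun_pow (hAL : ∀ f g : E, 0 ≤ f → 0 ≤ g → ‖f + g‖ = ‖f‖ + ‖g‖)
    (S : E →L[ℝ] E) (hSpos : ∀ f : E, 0 ≤ f → 0 ≤ S f)
    (hSnorm : ∀ f : E, 0 ≤ f → ‖S f‖ = ‖f‖)
    (n : ℕ) (x : E) : onefun ((S ^ n) x) = onefun x := by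
  induction n with
  | zero => simp
  | succ n ih => rw [pow_apply_succ, onefun_markov hAL S hSpos hSnorm, ih]

lemma dens_est (hAL : ∀ f g : E, 0 ≤ f → 0 ≤ g → ‖f + g‖ = ‖f‖ + ‖g‖)
    {w h : E} (h0 : 0 ≤ h) (hw : 0 ≤ w) (hw1 : ‖w‖ = 1) :
    ‖w - h‖ ≤ 1 - ‖h‖ + 2 * ‖(w - h)⁻‖ := by
  have e1 : ‖w - h‖ = ‖(w - h)⁺‖ + ‖(w - h)⁻‖ := al_norm_posneg hAL _
  have e2 : onefun (w - h) = 1 - ‖h‖ := by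
    rw [sub_eq_add_neg, onefun_add hAL, onefun_neg, onefun_of_nonneg hw,
      onefun_of_nonneg h0, hw1, sub_eq_add_neg]
  have e3 : onefun (w - h) = ‖(w - h)⁺‖ - ‖(w - h)⁻‖ := rfl
  linarith

lemma lb_norm_le_one (hAL : ∀ f g : E, 0 ≤ f → 0 ≤ g → ‖f + g‖ = ‖f‖ + ‖g‖)
    (S : E →L[ℝ] E) (hSpos : ∀ f : E, 0 ≤ f → 0 ≤ S f)
    (hSnorm : ∀ f : E, 0 ≤ f → ‖S f‖ = ‖f‖)
    (hd : ∃ f : E, 0 ≤ f ∧ ‖f‖ = 1) (h : E) (hh0 : 0 ≤ h)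
    (hLB : ∀ f : E, 0 ≤ f → ‖f‖ = 1 →
      Tendsto (fun n : ℕ => ‖((S ^ n) f - h)⁻‖) atTop (𝓝 0)) : ‖h‖ ≤ 1 := by
  obtain ⟨f, hf0, hf1⟩ := hd
  refine le_of_forall_pos_le_add fun ε hε => ?_
  obtain ⟨n, hn⟩ := ((hLB f hf0 hf1).eventually (gt_mem_nhds hε)).exists
  have h1 : h - (S ^ n) f ≤ ((S ^ n) f - h)⁻ := by
    rw [← posPart_neg, neg_sub]; exact le_posPart _
  have hle : h ≤ (S ^ n) f + ((S ^ n) f - h)⁻ := sub_le_iff_le_add'.mp h1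
  have h2 : ‖h‖ ≤ ‖(S ^ n) f + ((S ^ n) f - h)⁻‖ := norm_mono_nonneg hh0 hle
  rw [hAL _ _ (pow_pos' S hSpos n f hf0) (negPart_nonneg _),
    pow_norm' S hSpos hSnorm n f hf0, hf1] at h2
  linarith

lemma contraction_step (hAL : ∀ f g : E, 0 ≤ f → 0 ≤ g → ‖f + g‖ = ‖f‖ + ‖g‖)
    (S : E →L[ℝ] E) (hSpos : ∀ f : E, 0 ≤ f → 0 ≤ S f)
    (hSnorm : ∀ f : E, 0 ≤ f → ‖S f‖ = ‖f‖)
    (h : E) (hh0 : 0 ≤ h) (hγ : 0 < ‖h‖)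
    (hLB : ∀ f : E, 0 ≤ f → ‖f‖ = 1 →
      Tendsto (fun n : ℕ => ‖((S ^ n) f - h)⁻‖) atTop (𝓝 0))
    (v : E) (hv : onefun v = 0) (hvne : v ≠ 0) :
    ∃ m : ℕ, ‖(S ^ m) v‖ ≤ (1 - ‖h‖ / 2) * ‖v‖ := by
  have hceq : ‖(v⁻ : E)‖ = ‖(v⁺ : E)‖ := by rw [onefun] at hv; linarith
  have hvnorm : ‖v‖ = 2 * ‖(v⁺ : E)‖ := by
    have := al_norm_posneg hAL v; linarith
  have hcpos : 0 < ‖(v⁺ : E)‖ := by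
    rcases (norm_nonneg (v⁺ : E)).eq_or_lt with h0 | h0
    · exfalso
      apply hvne
      have h1 : (v⁺ : E) = 0 := norm_eq_zero.mp h0.symm
      have h2 : (v⁻ : E) = 0 := norm_eq_zero.mp (by rw [hceq, ← h0])
      rw [← posPart_sub_negPart v, h1, h2, sub_zero]
    · exact h0
  have hcinv : (0:ℝ) ≤ ‖(v⁺ : E)‖⁻¹ := inv_nonneg.mpr hcpos.le
  have hf0 : 0 ≤ ‖(v⁺ : E)‖⁻¹ • (v⁺ : E) := real_smul_nonneg hcinv (posPart_nonneg v)
  have hg0 : 0 ≤ ‖(v⁺ : E)‖⁻¹ • (v⁻ : E) := real_smul_nonneg hcinv (negPart_nonneg v)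
  have hf1 : ‖‖(v⁺ : E)‖⁻¹ • (v⁺ : E)‖ = 1 := by
    rw [norm_smul, Real.norm_eq_abs, abs_of_nonneg hcinv, inv_mul_cancel₀ hcpos.ne']
  have hg1 : ‖‖(v⁺ : E)‖⁻¹ • (v⁻ : E)‖ = 1 := by
    rw [norm_smul, Real.norm_eq_abs, abs_of_nonneg hcinv, hceq, inv_mul_cancel₀ hcpos.ne']
  have hε : 0 < ‖h‖ / 4 := by linarith
  obtain ⟨m, hm1, hm2⟩ :=
    (((hLB _ hf0 hf1).eventually (gt_mem_nhds hε)).and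
      ((hLB _ hg0 hg1).eventually (gt_mem_nhds hε))).exists
  refine ⟨m, ?_⟩
  have hWf0 : 0 ≤ (S ^ m) (‖(v⁺ : E)‖⁻¹ • (v⁺ : E)) := pow_pos' S hSpos m _ hf0
  have hWg0 : 0 ≤ (S ^ m) (‖(v⁺ : E)‖⁻¹ • (v⁻ : E)) := pow_pos' S hSpos m _ hg0
  have hWf1 : ‖(S ^ m) (‖(v⁺ : E)‖⁻¹ • (v⁺ : E))‖ = 1 := by
    rw [pow_norm' S hSpos hSnorm m _ hf0, hf1]
  have hWg1 : ‖(S ^ m) (‖(v⁺ : E)‖⁻¹ • (v⁻ : E))‖ = 1 := by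
    rw [pow_norm' S hSpos hSnorm m _ hg0, hg1]
  have df := dens_est hAL hh0 hWf0 hWf1
  have dg := dens_est hAL hh0 hWg0 hWg1
  have key : (S ^ m) v =
      ‖(v⁺ : E)‖ • ((S ^ m) (‖(v⁺ : E)‖⁻¹ • (v⁺ : E)) - (S ^ m) (‖(v⁺ : E)‖⁻¹ • (v⁻ : E))) := by
    rw [map_smul, map_smul, ← smul_sub, smul_inv_smul₀ hcpos.ne', ← map_sub,
      posPart_sub_negPart]
  have tri : ‖(S ^ m) (‖(v⁺ : E)‖⁻¹ • (v⁺ : E)) - (S ^ m) (‖(v⁺ : E)‖⁻¹ • (v⁻ : E))‖ ≤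
      ‖(S ^ m) (‖(v⁺ : E)‖⁻¹ • (v⁺ : E)) - h‖ + ‖(S ^ m) (‖(v⁺ : E)‖⁻¹ • (v⁻ : E)) - h‖ := by
    have e : (S ^ m) (‖(v⁺ : E)‖⁻¹ • (v⁺ : E)) - (S ^ m) (‖(v⁺ : E)‖⁻¹ • (v⁻ : E)) =
        ((S ^ m) (‖(v⁺ : E)‖⁻¹ • (v⁺ : E)) - h) - ((S ^ m) (‖(v⁺ : E)‖⁻¹ • (v⁻ : E)) - h) := by
      abel
    rw [e]; exact norm_sub_le _ _
  have hX : ‖(S ^ m) (‖(v⁺ : E)‖⁻¹ • (v⁺ : E)) - (S ^ m) (‖(v⁺ : E)‖⁻¹ • (v⁻ : E))‖ ≤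
      2 - ‖h‖ := by linarith
  rw [key, norm_smul, Real.norm_eq_abs, abs_of_pos hcpos, hvnorm]
  calc ‖(v⁺ : E)‖ * ‖(S ^ m) (‖(v⁺ : E)‖⁻¹ • (v⁺ : E)) - (S ^ m) (‖(v⁺ : E)‖⁻¹ • (v⁻ : E))‖
      ≤ ‖(v⁺ : E)‖ * (2 - ‖h‖) := mul_le_mul_of_nonneg_left hX (norm_nonneg _)
    _ = (1 - ‖h‖ / 2) * (2 * ‖(v⁺ : E)‖) := by ring

lemma tendsto_pow_norm_zero (hAL : ∀ f g : E, 0 ≤ f → 0 ≤ g → ‖f + g‖ = ‖f‖ + ‖g‖)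
    (S : E →L[ℝ] E) (hSpos : ∀ f : E, 0 ≤ f → 0 ≤ S f)
    (hSnorm : ∀ f : E, 0 ≤ f → ‖S f‖ = ‖f‖)
    (h : E) (hh0 : 0 ≤ h) (hγ : 0 < ‖h‖) (hγ1 : ‖h‖ ≤ 1)
    (hLB : ∀ f : E, 0 ≤ f → ‖f‖ = 1 →
      Tendsto (fun n : ℕ => ‖((S ^ n) f - h)⁻‖) atTop (𝓝 0))
    (u : E) (hu : onefun u = 0) :
    Tendsto (fun n : ℕ => ‖(S ^ n) u‖) atTop (𝓝 0) := by
  have hanti : Antitone (fun n : ℕ => ‖(S ^ n) u‖) := antitone_nat_of_succ_le (fun n => by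
    show ‖(S ^ (n + 1)) u‖ ≤ ‖(S ^ n) u‖
    rw [pow_apply_succ]
    exact markov_contraction hAL S hSpos hSnorm _)
  have hbdd : BddBelow (Set.range (fun n : ℕ => ‖(S ^ n) u‖)) := by
    refine ⟨0, ?_⟩
    rintro x ⟨n, rfl⟩
    exact norm_nonneg _
  have hconv : Tendsto (fun n : ℕ => ‖(S ^ n) u‖) atTop (𝓝 (⨅ n : ℕ, ‖(S ^ n) u‖)) :=
    tendsto_atTop_ciInf hanti hbdd
  have hL0 : 0 ≤ ⨅ n : ℕ, ‖(S ^ n) u‖ := le_ciInf fun n => norm_nonneg _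
  rcases hL0.eq_or_lt with hL0' | hLpos
  · rwa [← hL0'] at hconv
  · exfalso
    set L := ⨅ n : ℕ, ‖(S ^ n) u‖ with hL
    have hfrac : (0:ℝ) < 1 - ‖h‖ / 2 := by linarith
    have hlt : L < L / (1 - ‖h‖ / 2) := by
      rw [lt_div_iff₀ hfrac]
      nlinarith
    obtain ⟨N, hN⟩ := (hconv.eventually (gt_mem_nhds hlt)).exists
    have hvind : onefun ((S ^ N) u) = 0 := by
      rw [onefun_pow hAL S hSpos hSnorm, hu]
    have hvne : (S ^ N) u ≠ 0 := by
      intro h0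
      have h1 : L ≤ ‖(S ^ N) u‖ := ciInf_le hbdd N
      rw [h0, norm_zero] at h1
      linarith
    obtain ⟨m, hm⟩ := contraction_step hAL S hSpos hSnorm h hh0 hγ hLB ((S ^ N) u) hvind hvne
    have h1 : ‖(S ^ (m + N)) u‖ ≤ (1 - ‖h‖ / 2) * ‖(S ^ N) u‖ := by
      rw [pow_add, ContinuousLinearMap.mul_apply]
      exact hm
    have hLle : L ≤ ‖(S ^ (m + N)) u‖ := ciInf_le hbdd _
    have h2 : (1 - ‖h‖ / 2) * ‖(S ^ N) u‖ < (1 - ‖h‖ / 2) * (L / (1 - ‖h‖ / 2)) :=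
      mul_lt_mul_of_pos_left hN hfrac
    have h3 : (1 - ‖h‖ / 2) * (L / (1 - ‖h‖ / 2)) = L := by
      rw [mul_comm]; exact div_mul_cancel₀ L hfrac.ne'
    linarith

end Discrete

section LB
variable {E : Type*} [NormedAddCommGroup E] [Lattice E] [HasSolidNorm E] [IsOrderedAddMonoid E] [NormedSpace ℝ E]

def IsLB (S : E →L[ℝ] E) (h : E) : Prop :=
  0 ≤ h ∧ ∀ f : E, 0 ≤ f → ‖f‖ = 1 →
    Tendsto (fun n : ℕ => ‖((S ^ n) f - h)⁻‖) atTop (𝓝 0)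

lemma posPart_sup_eq (x y : E) : (x ⊔ y)⁺ = x⁺ ⊔ y⁺ := by
  rw [posPart_def, posPart_def, posPart_def, sup_sup_distrib_right]

lemma IsLB.sup' (hAL : ∀ f g : E, 0 ≤ f → 0 ≤ g → ‖f + g‖ = ‖f‖ + ‖g‖)
    {S : E →L[ℝ] E} {h₁ h₂ : E} (H1 : IsLB S h₁) (H2 : IsLB S h₂) : IsLB S (h₁ ⊔ h₂) := by
  refine ⟨le_trans H1.1 le_sup_left, fun f hf0 hf1 => ?_⟩
  refine squeeze_zero (fun n => norm_nonneg _) (fun n => ?_)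
    (by simpa only [add_zero] using (H1.2 f hf0 hf1).add (H2.2 f hf0 hf1))
  have e1 : ((S ^ n) f - h₁ ⊔ h₂)⁻ = (h₁ - (S ^ n) f)⁺ ⊔ (h₂ - (S ^ n) f)⁺ := by
    rw [← posPart_neg, neg_sub, sup_sub, posPart_sup_eq]
  have e2 : (h₁ - (S ^ n) f)⁺ ⊔ (h₂ - (S ^ n) f)⁺ ≤
      (h₁ - (S ^ n) f)⁺ + (h₂ - (S ^ n) f)⁺ :=
    sup_le (le_add_of_nonneg_right (posPart_nonneg _)) (le_add_of_nonneg_left (posPart_nonneg _))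
  have e3 : ‖((S ^ n) f - h₁ ⊔ h₂)⁻‖ ≤ ‖(h₁ - (S ^ n) f)⁺ + (h₂ - (S ^ n) f)⁺‖ := by
    rw [e1]
    exact norm_mono_nonneg (le_trans (posPart_nonneg _) le_sup_left) e2
  have e4 : (h₁ - (S ^ n) f)⁺ = ((S ^ n) f - h₁)⁻ := by rw [← neg_sub, posPart_neg]
  have e5 : (h₂ - (S ^ n) f)⁺ = ((S ^ n) f - h₂)⁻ := by rw [← neg_sub, posPart_neg]
  calc ‖((S ^ n) f - h₁ ⊔ h₂)⁻‖ ≤ ‖(h₁ - (S ^ n) f)⁺ + (h₂ - (S ^ n) f)⁺‖ := e3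
    _ ≤ ‖(h₁ - (S ^ n) f)⁺‖ + ‖(h₂ - (S ^ n) f)⁺‖ := norm_add_le _ _
    _ = ‖((S ^ n) f - h₁)⁻‖ + ‖((S ^ n) f - h₂)⁻‖ := by rw [e4, e5]

lemma IsLB.limit {S : E →L[ℝ] E} (g : ℕ → E) (hg : ∀ n, IsLB S (g n)) {h' : E}
    (hconv : Tendsto g atTop (𝓝 h')) : IsLB S h' := by
  constructor
  · exact isClosed_nonneg.mem_of_tendsto hconv (Eventually.of_forall fun n => (hg n).1)
  · intro f hf0 hf1
    rw [Metric.tendsto_atTop]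
    intro ε hε
    obtain ⟨k, hk'⟩ := Metric.tendsto_atTop.mp hconv (ε / 2) (by linarith)
    have hk := hk' k le_rfl
    rw [dist_eq_norm] at hk
    obtain ⟨N, hN⟩ := Metric.tendsto_atTop.mp ((hg k).2 f hf0 hf1) (ε / 2) (by linarith)
    refine ⟨N, fun n hn => ?_⟩
    have hNn := hN n hn
    rw [Real.dist_eq, sub_zero, abs_of_nonneg (norm_nonneg _)] at hNn
    rw [Real.dist_eq, sub_zero, abs_of_nonneg (norm_nonneg _)]
    have t1 : ‖((S ^ n) f - h')⁻ - ((S ^ n) f - g k)⁻‖ ≤ ‖g k - h'‖ := by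
      have := norm_negPart_sub_le ((S ^ n) f - h') ((S ^ n) f - g k)
      have e : ((S ^ n) f - h') - ((S ^ n) f - g k) = g k - h' := by abel
      rwa [e] at this
    calc ‖((S ^ n) f - h')⁻‖
        = ‖((S ^ n) f - g k)⁻ + (((S ^ n) f - h')⁻ - ((S ^ n) f - g k)⁻)‖ := by
          congr 1; abel
      _ ≤ ‖((S ^ n) f - g k)⁻‖ + ‖((S ^ n) f - h')⁻ - ((S ^ n) f - g k)⁻‖ := norm_add_le _ _
      _ < ε / 2 + ε / 2 := add_lt_add hNn (t1.trans_lt hk)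
      _ = ε := by ring

lemma exists_fixed_density [CompleteSpace E]
    (hAL : ∀ f g : E, 0 ≤ f → 0 ≤ g → ‖f + g‖ = ‖f‖ + ‖g‖)
    (S : E →L[ℝ] E) (hSpos : ∀ f : E, 0 ≤ f → 0 ≤ S f)
    (hSnorm : ∀ f : E, 0 ≤ f → ‖S f‖ = ‖f‖)
    (h : E) (hh0 : 0 ≤ h) (hhne : h ≠ 0)
    (hLB : ∀ f : E, 0 ≤ f → ‖f‖ = 1 →
      Tendsto (fun n : ℕ => ‖((S ^ n) f - h)⁻‖) atTop (𝓝 0)) :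
    ∃ f₀ : E, 0 ≤ f₀ ∧ ‖f₀‖ = 1 ∧ S f₀ = f₀ := by
  have hγ : 0 < ‖h‖ := norm_pos_iff.mpr hhne
  have hd : ∃ f : E, 0 ≤ f ∧ ‖f‖ = 1 := by
    refine ⟨‖h‖⁻¹ • h, real_smul_nonneg (inv_nonneg.mpr hγ.le) hh0, ?_⟩
    rw [norm_smul, Real.norm_eq_abs, abs_of_nonneg (inv_nonneg.mpr hγ.le),
      inv_mul_cancel₀ hγ.ne']
  set Γ : Set ℝ := {r : ℝ | ∃ h' : E, IsLB S h' ∧ ‖h'‖ = r} with hΓ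
  have hne : ‖h‖ ∈ Γ := ⟨h, ⟨hh0, hLB⟩, rfl⟩
  have hbdd : BddAbove Γ := by
    refine ⟨1, ?_⟩
    rintro r ⟨h', H, rfl⟩
    exact lb_norm_le_one hAL S hSpos hSnorm hd h' H.1 H.2
  set M := sSup Γ with hM
  have hM1 : ‖h‖ ≤ M := le_csSup hbdd hne
  have hseq : ∀ n : ℕ, ∃ h' : E, IsLB S h' ∧ M - 1 / (n + 1) < ‖h'‖ := by
    intro n
    have hlt : M - 1 / (n + 1 : ℝ) < M := by
      have : (0:ℝ) < 1 / (n + 1) := by positivity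
      linarith
    obtain ⟨r, hrΓ, hr⟩ := exists_lt_of_lt_csSup ⟨_, hne⟩ hlt
    obtain ⟨h', H, rfl⟩ := hrΓ
    exact ⟨h', H, hr⟩
  choose hs Hs hslt using hseq
  set g : ℕ → E := fun n => Nat.rec (hs 0) (fun k gk => gk ⊔ hs (k + 1)) n with hgdef
  have hg0 : g 0 = hs 0 := rfl
  have hgsucc : ∀ n, g (n + 1) = g n ⊔ hs (n + 1) := fun n => rfl
  have hgLB : ∀ n, IsLB S (g n) := by
    intro n
    induction n with
    | zero => exact Hs 0
    | succ n ih => rw [hgsucc]; exact ih.sup' hAL (Hs (n + 1))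
  have hmono : Monotone g := monotone_nat_of_le_succ fun n => by rw [hgsucc]; exact le_sup_left
  have hglow : ∀ n, M - 1 / (n + 1) < ‖g n‖ := by
    intro n
    refine lt_of_lt_of_le (hslt n) (norm_mono_nonneg (Hs n).1 ?_)
    cases n with
    | zero => rw [hg0]
    | succ k => rw [hgsucc]; exact le_sup_right
  have hghigh : ∀ n, ‖g n‖ ≤ M := fun n => le_csSup hbdd ⟨g n, hgLB n, rfl⟩
  have hdist : ∀ n m, n ≤ m → dist (g n) (g m) ≤ 1 / (n + 1) := by
    intro n m hnm
    have hle : g n ≤ g m := hmono hnm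
    have e : g n + (g m - g n) = g m := by abel
    have : ‖g m‖ = ‖g n‖ + ‖g m - g n‖ := by
      conv_lhs => rw [← e]
      exact hAL _ _ (hgLB n).1 (sub_nonneg.mpr hle)
    rw [dist_eq_norm, ← norm_neg, neg_sub]
    have h1 := hglow n
    have h2 := hghigh m
    linarith
  have hcauchy : CauchySeq g := by
    refine cauchySeq_of_le_tendsto_0 (fun N => 1 / (N + 1)) (fun n m N hn hm => ?_)
      tendsto_one_div_add_atTop_nhds_zero_nat
    rcases le_total n m with hnm | hmn
    · exact (hdist n m hnm).trans (by
        apply one_div_le_one_div_of_le (by positivity)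
        exact_mod_cast by exact_mod_cast add_le_add_left (Nat.cast_le.mpr hn) 1)
    · rw [dist_comm]
      exact (hdist m n hmn).trans (by
        apply one_div_le_one_div_of_le (by positivity)
        exact_mod_cast by exact_mod_cast add_le_add_left (Nat.cast_le.mpr hm) 1)
  obtain ⟨hstar, hconv⟩ := cauchySeq_tendsto_of_complete hcauchy
  have Hstar : IsLB S hstar := IsLB.limit g hgLB hconv
  have hnorm_star : ‖hstar‖ = M := by
    have hlow : Tendsto (fun n : ℕ => M - 1 / (n + 1 : ℝ)) atTop (𝓝 M) := by
      have := (tendsto_const_nhds : Tendsto (fun _ : ℕ => M) atTop (𝓝 M)).sub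
        tendsto_one_div_add_atTop_nhds_zero_nat
      simpa using this
    refine tendsto_nhds_unique hconv.norm
      (tendsto_of_tendsto_of_tendsto_of_le_of_le hlow tendsto_const_nhds
        (fun n => (hglow n).le) hghigh)
  have hstar_ne : hstar ≠ 0 := by
    intro h0
    rw [h0, norm_zero] at hnorm_star
    linarith [hnorm_star ▸ hM1]
  -- S hstar is a lower bound
  have HS : IsLB S (S hstar) := by
    refine ⟨hSpos _ Hstar.1, fun f hf0 hf1 => ?_⟩
    have bound : ∀ n : ℕ, ‖((S ^ (n + 1)) f - S hstar)⁻‖ ≤ ‖((S ^ n) f - hstar)⁻‖ := by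
      intro n
      have e : (S ^ (n + 1)) f - S hstar = S ((S ^ n) f - hstar) := by
        rw [map_sub, ← pow_apply_succ]
      have hsplit : S ((S ^ n) f - hstar) =
          S (((S ^ n) f - hstar)⁺) - S (((S ^ n) f - hstar)⁻) := by
        rw [← map_sub, posPart_sub_negPart]
      have hge : -(S (((S ^ n) f - hstar)⁻)) ≤ S ((S ^ n) f - hstar) := by
        rw [hsplit]
        have hp := hSpos _ (posPart_nonneg ((S ^ n) f - hstar))
        have := add_le_add_right hp (-(S (((S ^ n) f - hstar)⁻)))
        simpa [sub_eq_add_neg] using this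
      have hneg : ((S ^ (n + 1)) f - S hstar)⁻ ≤ S (((S ^ n) f - hstar)⁻) := by
        rw [e]
        have := negPart_le_of_neg_le hge
        rwa [posPart_eq_self.mpr (hSpos _ (negPart_nonneg _))] at this
      calc ‖((S ^ (n + 1)) f - S hstar)⁻‖ ≤ ‖S (((S ^ n) f - hstar)⁻)‖ :=
            norm_mono_nonneg (negPart_nonneg _) hneg
        _ = ‖((S ^ n) f - hstar)⁻‖ := hSnorm _ (negPart_nonneg _)
    have shifted : Tendsto (fun n : ℕ => ‖((S ^ (n + 1)) f - S hstar)⁻‖) atTop (𝓝 0) :=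
      squeeze_zero (fun n => norm_nonneg _) bound (Hstar.2 f hf0 hf1)
    exact (tendsto_add_atTop_iff_nat 1).mp shifted
  -- join argument
  have hk : IsLB S (hstar ⊔ S hstar) := Hstar.sup' hAL HS
  have hkM : ‖hstar ⊔ S hstar‖ ≤ M := le_csSup hbdd ⟨_, hk, rfl⟩
  have hkle : hstar ≤ hstar ⊔ S hstar := le_sup_left
  have hkeq : hstar ⊔ S hstar = hstar := by
    have e : hstar + (hstar ⊔ S hstar - hstar) = hstar ⊔ S hstar := by abel
    have h1 : ‖hstar ⊔ S hstar‖ = ‖hstar‖ + ‖hstar ⊔ S hstar - hstar‖ := by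
      conv_lhs => rw [← e]
      exact hAL _ _ Hstar.1 (sub_nonneg.mpr hkle)
    have h2 : ‖hstar ⊔ S hstar - hstar‖ ≤ 0 := by
      rw [hnorm_star] at h1
      linarith
    have h3 : hstar ⊔ S hstar - hstar = 0 := by
      rw [← norm_le_zero_iff]; exact h2
    exact sub_eq_zero.mp h3
  have hSle : S hstar ≤ hstar := le_sup_right.trans hkeq.le
  have hfix : S hstar = hstar := by
    have e : S hstar + (hstar - S hstar) = hstar := by abel
    have h1 : ‖hstar‖ = ‖S hstar‖ + ‖hstar - S hstar‖ := by
      conv_lhs => rw [← e]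
      exact hAL _ _ (hSpos _ Hstar.1) (sub_nonneg.mpr hSle)
    rw [hSnorm _ Hstar.1] at h1
    have h2 : hstar - S hstar = 0 := by
      rw [← norm_le_zero_iff]; linarith
    exact (sub_eq_zero.mp h2).symm
  refine ⟨‖hstar‖⁻¹ • hstar, real_smul_nonneg (inv_nonneg.mpr (norm_nonneg _)) Hstar.1, ?_, ?_⟩
  · rw [norm_smul, Real.norm_eq_abs, abs_of_nonneg (inv_nonneg.mpr (norm_nonneg _)),
      inv_mul_cancel₀ (norm_pos_iff.mpr hstar_ne).ne']
  · rw [map_smul, hfix]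

end LB

section Main
variable {E : Type*} [NormedAddCommGroup E] [Lattice E] [HasSolidNorm E] [IsOrderedAddMonoid E] [NormedSpace ℝ E]

lemma pow_fixed (S : E →L[ℝ] E) {f₀ : E} (hfix : S f₀ = f₀) (n : ℕ) : (S ^ n) f₀ = f₀ := by
  induction n with
  | zero => simp
  | succ n ih => rw [pow_apply_succ, ih, hfix]

lemma discrete_package [CompleteSpace E]
    (hAL : ∀ f g : E, 0 ≤ f → 0 ≤ g → ‖f + g‖ = ‖f‖ + ‖g‖)
    (S : E →L[ℝ] E) (hSpos : ∀ f : E, 0 ≤ f → 0 ≤ S f)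
    (hSnorm : ∀ f : E, 0 ≤ f → ‖S f‖ = ‖f‖)
    (h : E) (hh0 : 0 ≤ h) (hhne : h ≠ 0)
    (hLB : ∀ f : E, 0 ≤ f → ‖f‖ = 1 →
      Tendsto (fun n : ℕ => ‖((S ^ n) f - h)⁻‖) atTop (𝓝 0)) :
    ∃ f₀ : E, 0 ≤ f₀ ∧ ‖f₀‖ = 1 ∧ S f₀ = f₀ ∧
      (∀ f : E, 0 ≤ f → (oneCLM hAL) f = ‖f‖) ∧
      ∀ f : E, Tendsto (fun n : ℕ => (S ^ n) f) atTop (𝓝 ((oneCLM hAL) f • f₀)) := by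
  obtain ⟨f₀, hf₀0, hf₀1, hfix⟩ := exists_fixed_density hAL S hSpos hSnorm h hh0 hhne hLB
  have hγ : 0 < ‖h‖ := norm_pos_iff.mpr hhne
  have hd : ∃ f : E, 0 ≤ f ∧ ‖f‖ = 1 := ⟨f₀, hf₀0, hf₀1⟩
  have hγ1 : ‖h‖ ≤ 1 := lb_norm_le_one hAL S hSpos hSnorm hd h hh0 hLB
  refine ⟨f₀, hf₀0, hf₀1, hfix, fun f hf => onefun_of_nonneg hf, fun f => ?_⟩
  have hone_f₀ : (oneCLM hAL) f₀ = 1 := by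
    rw [oneCLM_apply, onefun_of_nonneg hf₀0, hf₀1]
  have hu : onefun (f - (oneCLM hAL) f • f₀) = 0 := by
    rw [← oneCLM_apply hAL, map_sub, map_smul, hone_f₀, smul_eq_mul, mul_one, sub_self]
  have hpowu : ∀ n : ℕ,
      (S ^ n) (f - (oneCLM hAL) f • f₀) = (S ^ n) f - (oneCLM hAL) f • f₀ := by
    intro n
    rw [map_sub, map_smul, pow_fixed S hfix n]
  have ht := tendsto_pow_norm_zero hAL S hSpos hSnorm h hh0 hγ hγ1 hLB _ hu
  rw [tendsto_iff_norm_sub_tendsto_zero]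
  exact ht.congr fun n => by rw [hpowu n]

end Main


/-- The Lasota–Yorke theorem: a Markov semigroup on an AL-space converges strongly to a
rank-one projection `𝟙 ⊗ f₀` (with `𝟙` the norm functional and `f₀` a normalised positive
fixed vector) if and only if it admits a non-zero lower bound.  Both the time-discrete
case `J = ℕ` and the case `J = (0,∞)` are covered. -/
theorem lasota_yorke
    {E : Type*} [NormedAddCommGroup E] [Lattice E] [HasSolidNorm E] [IsOrderedAddMonoid E] [NormedSpace ℝ E] [CompleteSpace E]
    (hAL : ∀ f g : E, 0 ≤ f → 0 ≤ g → ‖f + g‖ = ‖f‖ + ‖g‖) :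
    -- the time-discrete case `J = ℕ`
    (∀ S : E →L[ℝ] E,
      (∀ f : E, 0 ≤ f → 0 ≤ S f) → (∀ f : E, 0 ≤ f → ‖S f‖ = ‖f‖) →
      ((∃ (f₀ : E) (one : E →L[ℝ] ℝ), 0 ≤ f₀ ∧ ‖f₀‖ = 1 ∧ S f₀ = f₀ ∧
          (∀ f : E, 0 ≤ f → one f = ‖f‖) ∧
          (∀ f : E, Tendsto (fun n : ℕ => (S ^ n) f) atTop (𝓝 (one f • f₀)))) ↔
        (∃ h : E, 0 ≤ h ∧ h ≠ 0 ∧ ∀ f : E, 0 ≤ f → ‖f‖ = 1 →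
          Tendsto (fun n : ℕ => ‖((S ^ n) f - h)⁻‖) atTop (𝓝 0)))) ∧
    -- the case `J = (0, ∞)`
    (∀ T : ℝ → E →L[ℝ] E,
      (∀ s t : ℝ, 0 < s → 0 < t → T (s + t) = (T s).comp (T t)) →
      (∀ t : ℝ, 0 < t → ∀ f : E, 0 ≤ f → 0 ≤ T t f) →
      (∀ t : ℝ, 0 < t → ∀ f : E, 0 ≤ f → ‖T t f‖ = ‖f‖) →
      ((∃ (f₀ : E) (one : E →L[ℝ] ℝ), 0 ≤ f₀ ∧ ‖f₀‖ = 1 ∧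
          (∀ t : ℝ, 0 < t → T t f₀ = f₀) ∧
          (∀ f : E, 0 ≤ f → one f = ‖f‖) ∧
          (∀ f : E, Tendsto (fun t : ℝ => T t f) atTop (𝓝 (one f • f₀)))) ↔
        (∃ h : E, 0 ≤ h ∧ h ≠ 0 ∧ ∀ f : E, 0 ≤ f → ‖f‖ = 1 →
          Tendsto (fun t : ℝ => ‖(T t f - h)⁻‖) atTop (𝓝 0)))) := by
  constructor
  · -- discrete case
    intro S hSpos hSnorm
    constructor
    · rintro ⟨f₀, one, h0, h1, hfix, hone, hconv⟩
      refine ⟨f₀, h0, fun hz => by rw [hz, norm_zero] at h1; norm_num at h1, ?_⟩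
      intro f hf0 hf1
      have hc := hconv f
      rw [hone f hf0, hf1, one_smul] at hc
      have hnorm := tendsto_iff_norm_sub_tendsto_zero.mp hc
      exact squeeze_zero (fun n => norm_nonneg _) (fun n => norm_negPart_le _) hnorm
    · rintro ⟨h, hh0, hhne, hLB⟩
      obtain ⟨f₀, h0, h1, hfix, hone, hconv⟩ :=
        discrete_package hAL S hSpos hSnorm h hh0 hhne hLB
      exact ⟨f₀, oneCLM hAL, h0, h1, hfix, hone, hconv⟩
  · -- continuous case
    intro T hTsem hTpos hTnorm
    constructor
    · rintro ⟨f₀, one, h0, h1, hfix, hone, hconv⟩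
      refine ⟨f₀, h0, fun hz => by rw [hz, norm_zero] at h1; norm_num at h1, ?_⟩
      intro f hf0 hf1
      have hc := hconv f
      rw [hone f hf0, hf1, one_smul] at hc
      have hnorm := tendsto_iff_norm_sub_tendsto_zero.mp hc
      exact squeeze_zero (fun t => norm_nonneg _) (fun t => norm_negPart_le _) hnorm
    · rintro ⟨h, hh0, hhne, hLB⟩
      set S := T 1 with hSdef
      have hSpos : ∀ f : E, 0 ≤ f → 0 ≤ S f := hTpos 1 one_pos
      have hSnorm : ∀ f : E, 0 ≤ f → ‖S f‖ = ‖f‖ := hTnorm 1 one_pos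
      have hpow : ∀ n : ℕ, 1 ≤ n → S ^ n = T (n : ℝ) := by
        intro n hn
        induction n with
        | zero => omega
        | succ n ih =>
          rcases Nat.eq_zero_or_pos n with hn0 | hn1
          · subst hn0; rw [pow_one]; norm_num [hSdef]
          · rw [pow_succ, ih hn1]
            have := hTsem (n : ℝ) 1 (by exact_mod_cast hn1) one_pos
            rw [ContinuousLinearMap.mul_def, ← this]
            norm_num
      have hSLB : ∀ f : E, 0 ≤ f → ‖f‖ = 1 →
          Tendsto (fun n : ℕ => ‖((S ^ n) f - h)⁻‖) atTop (𝓝 0) := by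
        intro f hf0 hf1
        have hcomp : Tendsto (fun n : ℕ => ‖(T (n : ℝ) f - h)⁻‖) atTop (𝓝 0) :=
          (hLB f hf0 hf1).comp tendsto_natCast_atTop_atTop
        refine hcomp.congr' ?_
        filter_upwards [eventually_ge_atTop 1] with n hn
        rw [hpow n hn]
      obtain ⟨f₀, h0, h1, hfixS, hone, hconv⟩ :=
        discrete_package hAL S hSpos hSnorm h hh0 hhne hSLB
      have hTfix : ∀ t : ℝ, 0 < t → T t f₀ = f₀ := by
        intro t ht
        have hg0 : 0 ≤ T t f₀ := hTpos t ht f₀ h0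
        have hgn : ‖T t f₀‖ = 1 := by rw [hTnorm t ht f₀ h0, h1]
        have hSg : S (T t f₀) = T t f₀ := by
          have e1 : T (1 + t) = (T 1).comp (T t) := hTsem 1 t one_pos ht
          have e2 : T (t + 1) = (T t).comp (T 1) := hTsem t 1 ht one_pos
          calc S (T t f₀) = ((T 1).comp (T t)) f₀ := rfl
            _ = T (1 + t) f₀ := by rw [e1]
            _ = T (t + 1) f₀ := by rw [add_comm]
            _ = (T t) (S f₀) := by rw [e2]; rfl
            _ = T t f₀ := by rw [hfixS]
        have hpows : ∀ n : ℕ, (S ^ n) (T t f₀) = T t f₀ := pow_fixed S hSg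
        have hconst : Tendsto (fun _ : ℕ => T t f₀) atTop
            (𝓝 ((oneCLM hAL) (T t f₀) • f₀)) :=
          (hconv (T t f₀)).congr fun n => by rw [hpows n]
        have heq := tendsto_nhds_unique tendsto_const_nhds hconst
        rwa [oneCLM_apply, onefun_of_nonneg hg0, hgn, one_smul] at heq
      refine ⟨f₀, oneCLM hAL, h0, h1, hTfix, hone, ?_⟩
      intro f
      have hnormu : Tendsto (fun n : ℕ => ‖(S ^ n) f - (oneCLM hAL) f • f₀‖) atTop (𝓝 0) :=
        tendsto_iff_norm_sub_tendsto_zero.mp (hconv f)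
      rw [Metric.tendsto_atTop]
      intro ε hε
      obtain ⟨N₀, hN₀⟩ := Metric.tendsto_atTop.mp hnormu ε hε
      set N := max N₀ 1 with hNdef
      have hN : ‖(S ^ N) f - (oneCLM hAL) f • f₀‖ < ε := by
        have := hN₀ N (le_max_left _ _)
        rwa [Real.dist_eq, sub_zero, abs_of_nonneg (norm_nonneg _)] at this
      have hN1 : 1 ≤ N := le_max_right _ _
      have hNpos : (0:ℝ) < (N : ℝ) := by exact_mod_cast Nat.lt_of_lt_of_le Nat.zero_lt_one hN1
      refine ⟨(N : ℝ) + 1, fun t ht => ?_⟩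
      have htN : 0 < t - N := by linarith
      have hsem : T t = (T (t - N)).comp (T (N : ℝ)) := by
        have := hTsem (t - N) (N : ℝ) htN hNpos
        rwa [sub_add_cancel] at this
      have key : T t f - (oneCLM hAL) f • f₀ =
          (T (t - N)) ((S ^ N) f - (oneCLM hAL) f • f₀) := by
        rw [map_sub]
        congr 1
        · rw [hsem, ContinuousLinearMap.comp_apply, hpow N hN1]
        · rw [map_smul, hTfix (t - N) htN]
      rw [dist_eq_norm, key]
      exact lt_of_le_of_lt
        (markov_contraction hAL (T (t - N)) (hTpos _ htN) (hTnorm _ htN) _) hN
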